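/- Let G be a finite connected simple graph with p vertices and q edges, and let μ be a natural number with μ ≥ 1. For every vertex x of G, the ordinal ω^μ · s(x) (where s(x) is the status of x in G and ω is the first infinite ordinal) satisfies the two-sided bound ω^μ · (p − 1) ≤ ω^μ · s(x) and 2 · (ω^μ · s(x)) ≤ ω^μ · ((p − 1)(p + 2) − 2q). (This is the transfinite status bound of the paper, expressed via the finite replacement 0-graph: the μ-status of any nonsingleton node of the transfinite graph equals ω^μ times the status of the corresponding vertex of the replacement graph.) -/
import Mathlib



open SimpleGraph Finset

variable {V : Type} {G : SimpleGraph V}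

/-- distance from the start to the `i`-th vertex of a walk is at most `i`. -/
lemma aux_dist_getVert_left (hG : G.Connected) {x y : V} (w : G.Walk x y) (i : ℕ) :
    G.dist x (w.getVert i) ≤ i := by
  induction i with
  | zero => simp [w.getVert_zero]
  | succ i ih =>
    by_cases hi : i < w.length
    · have hadj := w.adj_getVert_succ hi
      have h1 : G.dist (w.getVert i) (w.getVert (i+1)) ≤ 1 :=
        G.dist_le (SimpleGraph.Walk.cons hadj SimpleGraph.Walk.nil)
      calc G.dist x (w.getVert (i+1)) ≤
            G.dist x (w.getVert i) + G.dist (w.getVert i) (w.getVert (i+1)) :=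
              hG.dist_triangle
        _ ≤ i + 1 := add_le_add ih h1
    · push_neg at hi
      rw [w.getVert_of_length_le (by omega)]
      rw [w.getVert_of_length_le hi] at ih
      omega

/-- distance from the `i`-th vertex to the end is at most `length - i`. -/
lemma aux_dist_getVert_right {x y : V} (w : G.Walk x y) (i : ℕ) :
    G.dist (w.getVert i) y ≤ w.length - i := by
  induction w generalizing i with
  | nil => simp [SimpleGraph.Walk.getVert]
  | @cons u v z h q ih =>
    cases i with
    | zero =>
      simpa [SimpleGraph.Walk.getVert_zero] using G.dist_le (SimpleGraph.Walk.cons h q)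
    | succ i =>
      simpa [SimpleGraph.Walk.getVert_cons_succ] using ih i

lemma aux_status_le [Fintype V] [DecidableRel G.Adj] (hG : G.Connected) (x : V) :
    (∑ y, G.dist x y) + G.edgeFinset.card ≤
      (Fintype.card V - 1) + (Fintype.card V).choose 2 := by
  classical
  have hw : ∀ y : V, ∃ w : G.Walk x y, w.length = G.dist x y :=
    fun y => hG.exists_walk_length_eq_dist x y
  choose w hwlen using hw
  have hzdist : ∀ y i, i ≤ G.dist x y → G.dist x ((w y).getVert i) = i := by
    intro y i hi
    have h1 : G.dist x ((w y).getVert i) ≤ i := aux_dist_getVert_left hG (w y) i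
    have h2 : G.dist ((w y).getVert i) y ≤ (w y).length - i := aux_dist_getVert_right (w y) i
    have h3 : G.dist x y ≤ G.dist x ((w y).getVert i) + G.dist ((w y).getVert i) y :=
      hG.dist_triangle
    rw [hwlen y] at h2
    omega
  set ND : Finset (Sym2 V) := univ.filter (fun e : Sym2 V => ¬ e.IsDiag) with hND
  set NE : Finset (Sym2 V) := ND \ G.edgeFinset with hNE
  have hsub : G.edgeFinset ⊆ ND := by
    intro e he
    simp only [hND, mem_filter, mem_univ, true_and]
    exact (G.not_isDiag_of_mem_edgeSet (mem_edgeFinset.1 he))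
  have hNDcard : ND.card = (Fintype.card V).choose 2 := by
    rw [← Sym2.card_subtype_not_diag, Fintype.card_subtype]
  have hNEcard : NE.card = (Fintype.card V).choose 2 - G.edgeFinset.card := by
    rw [hNE, card_sdiff_of_subset hsub, hNDcard]
  set T : Finset (Σ _ : V, ℕ) := univ.sigma (fun y => Finset.range (G.dist x y - 1)) with hT
  have hinj : ∀ a ∈ T, (fun a : Σ _ : V, ℕ => s((w a.1).getVert a.2, a.1)) a ∈ NE := by
    rintro ⟨y, i⟩ ha
    simp only [hT, mem_sigma, mem_univ, true_and, Finset.mem_range] at ha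
    have hzi : G.dist x ((w y).getVert i) = i := hzdist y i (by omega)
    have hne : (w y).getVert i ≠ y := by
      intro h
      rw [h] at hzi
      omega
    have hnadj : ¬ G.Adj ((w y).getVert i) y := by
      intro hadj
      have h1 : G.dist ((w y).getVert i) y ≤ 1 :=
        G.dist_le (SimpleGraph.Walk.cons hadj SimpleGraph.Walk.nil)
      have h3 : G.dist x y ≤ G.dist x ((w y).getVert i) + G.dist ((w y).getVert i) y :=
        hG.dist_triangle
      omega
    simp only [hNE, hND, mem_sdiff, mem_filter, mem_univ, true_and, Sym2.isDiag_iff_proj_eq,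
      mem_edgeFinset, SimpleGraph.mem_edgeSet]
    exact ⟨hne, hnadj⟩
  have hinjOn : Set.InjOn (fun a : Σ _ : V, ℕ => s((w a.1).getVert a.2, a.1)) T := by
    rintro ⟨y, i⟩ hy ⟨y', i'⟩ hy' heq
    simp only [Finset.mem_coe, hT, mem_sigma, mem_univ, true_and, Finset.mem_range] at hy hy'
    simp only [Sym2.eq, Sym2.rel_iff', Prod.mk.injEq, Prod.swap_prod_mk] at heq
    rcases heq with ⟨h1, h2⟩ | ⟨h1, h2⟩
    · subst h2
      have e1 : G.dist x ((w y).getVert i) = i := hzdist y i (by omega)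
      have e2 : G.dist x ((w y).getVert i') = i' := hzdist y i' (by omega)
      rw [h1, e2] at e1
      subst e1
      rfl
    · exfalso
      have e1 : G.dist x ((w y).getVert i) = i := hzdist y i (by omega)
      have e2 : G.dist x ((w y').getVert i') = i' := hzdist y' i' (by omega)
      rw [h1] at e1
      rw [← h2] at e2
      omega
  have hcardle : T.card ≤ NE.card := Finset.card_le_card_of_injOn _ hinj hinjOn
  have hTcard : T.card = ∑ y, (G.dist x y - 1) := by
    rw [hT, Finset.card_sigma]
    simp
  have hx0 : G.dist x x = 0 := SimpleGraph.dist_self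
  have hsum : ∑ y, G.dist x y = ∑ y ∈ univ.erase x, G.dist x y := by
    rw [← Finset.sum_erase_add univ _ (mem_univ x), hx0, add_zero]
  have hpos : ∀ y ∈ univ.erase x, 1 ≤ G.dist x y := by
    intro y hy
    exact hG.pos_dist_of_ne (Ne.symm (Finset.ne_of_mem_erase hy))
  have hsum2 : ∑ y ∈ univ.erase x, G.dist x y ≤
      (univ.erase x).card + ∑ y, (G.dist x y - 1) := by
    have h1 : ∑ y ∈ univ.erase x, G.dist x y ≤
        ∑ y ∈ univ.erase x, (1 + (G.dist x y - 1)) := by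
      apply Finset.sum_le_sum
      intro y hy
      have := hpos y hy
      omega
    rw [Finset.sum_add_distrib, Finset.sum_const, smul_eq_mul, mul_one] at h1
    refine h1.trans ?_
    gcongr
    · intro y _
      exact mem_univ y
  have hcarderase : (univ.erase x).card = Fintype.card V - 1 := by
    rw [Finset.card_erase_of_mem (mem_univ x), Finset.card_univ]
  have hq : G.edgeFinset.card ≤ (Fintype.card V).choose 2 := by
    rw [← hNDcard]
    exact Finset.card_le_card hsub
  rw [hsum]
  rw [hTcard, hNEcard] at hcardle
  omega

lemma aux_lower [Fintype V] (hG : G.Connected) (x : V) :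
    Fintype.card V - 1 ≤ ∑ y, G.dist x y := by
  classical
  have h1 : (univ.erase x).card ≤ ∑ y ∈ univ.erase x, G.dist x y := by
    rw [Finset.card_eq_sum_ones]
    apply Finset.sum_le_sum
    intro y hy
    exact hG.pos_dist_of_ne (Ne.symm (Finset.ne_of_mem_erase hy))
  have h2 : ∑ y ∈ univ.erase x, G.dist x y ≤ ∑ y, G.dist x y :=
    Finset.sum_le_sum_of_subset (Finset.subset_univ _)
  rw [Finset.card_erase_of_mem (mem_univ x), Finset.card_univ] at h1
  omega

lemma aux_upper [Fintype V] [DecidableRel G.Adj] (hG : G.Connected) (x : V) :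
    2 * (∑ y, G.dist x y) ≤
      (Fintype.card V - 1) * (Fintype.card V + 2) - 2 * G.edgeFinset.card := by
  classical
  have h2 := aux_status_le hG x
  have hp : 1 ≤ Fintype.card V := Fintype.card_pos_iff.mpr ⟨x⟩
  obtain ⟨m, hm⟩ : ∃ m, Fintype.card V = m + 1 := ⟨Fintype.card V - 1, by omega⟩
  have hdvd : 2 ∣ Fintype.card V * (Fintype.card V - 1) := by
    rcases Nat.even_or_odd (Fintype.card V) with h | h
    · exact Dvd.dvd.mul_right h.two_dvd _
    · obtain ⟨k, hk⟩ := h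
      have h1 : Fintype.card V - 1 = 2 * k := by omega
      rw [h1]
      exact Dvd.dvd.mul_left ⟨k, rfl⟩ _
  have hch : 2 * (Fintype.card V).choose 2 = Fintype.card V * (Fintype.card V - 1) := by
    rw [Nat.choose_two_right, Nat.mul_div_cancel' hdvd]
  apply Nat.le_sub_of_add_le
  calc 2 * (∑ y, G.dist x y) + 2 * G.edgeFinset.card
      = 2 * ((∑ y, G.dist x y) + G.edgeFinset.card) := by ring
    _ ≤ 2 * ((Fintype.card V - 1) + (Fintype.card V).choose 2) :=
        Nat.mul_le_mul_left 2 h2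
    _ = 2 * (Fintype.card V - 1) + 2 * (Fintype.card V).choose 2 := by ring
    _ = 2 * (Fintype.card V - 1) + Fintype.card V * (Fintype.card V - 1) := by rw [hch]
    _ = (Fintype.card V - 1) * (Fintype.card V + 2) := by
        rw [hm]
        simp only [Nat.add_sub_cancel]
        ring

open Ordinal in
/-- Transfinite status bounds: if `G` is the finite replacement `0`-graph of a
`μ`-connected transfinite graph of rank `μ ≥ 1`, with `p` vertices and `q`
edges, then the `μ`-status `ω^μ · s(x)` of any vertex `x` satisfies
`ω^μ · (p - 1) ≤ ω^μ · s(x)` and `2 · (ω^μ · s(x)) ≤ ω^μ · ((p-1)(p+2) - 2q)`. -/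
theorem transfinite_status_bounds {V : Type} [Fintype V] (G : SimpleGraph V)
    [DecidableRel G.Adj] (hG : G.Connected) (μ : ℕ) (hμ : 1 ≤ μ) (x : V) :
    (omega0 ^ (μ : Ordinal)) * ((Fintype.card V - 1 : ℕ) : Ordinal) ≤
        (omega0 ^ (μ : Ordinal)) * ((∑ y, G.dist x y : ℕ) : Ordinal) ∧
      2 * ((omega0 ^ (μ : Ordinal)) * ((∑ y, G.dist x y : ℕ) : Ordinal)) ≤
        (omega0 ^ (μ : Ordinal)) *
          (((Fintype.card V - 1) * (Fintype.card V + 2)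
            - 2 * G.edgeFinset.card : ℕ) : Ordinal) := by

  have hA := aux_lower hG x
  have hB := aux_upper hG x
  constructor
  · exact mul_le_mul_right (by exact_mod_cast hA) _
  · have h2w : (2 : Ordinal) * (omega0 ^ (μ : Ordinal)) = omega0 ^ (μ : Ordinal) := by
      have hμ' : (μ : Ordinal) = 1 + ((μ - 1 : ℕ) : Ordinal) := by
        rw [← Nat.cast_one, ← Nat.cast_add]
        congr 1
        omega
      rw [hμ', opow_add, opow_one, ← mul_assoc]
      congr 1
      have h2 : (2 : Ordinal) = ((2 : ℕ) : Ordinal) := by norm_cast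
      rw [h2]
      exact mul_omega0 (by norm_num) (nat_lt_omega0 2)
    rw [← mul_assoc, h2w]
    exact mul_le_mul_right (by exact_mod_cast (by omega : ∑ y, G.dist x y ≤
      (Fintype.card V - 1) * (Fintype.card V + 2) - 2 * G.edgeFinset.card)) _
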